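/- Every strongly extension-closed class of objects in a triangulated category (closed under countable coproducts) is extension-closed: for any distinguished triangle A → B → C with A and C in the class, B also lies in the class. -/

import Mathlib

open CategoryTheory CategoryTheory.Limits CategoryTheory.Pretriangulated ZeroObject

universe v u

variable {C : Type u} [Category.{v} C] [Preadditive C] [HasZeroObject C]
  [HasShift C ℤ] [∀ n : ℤ, (shiftFunctor C n).Additive] [Pretriangulated C]

/-- The map `⊕ 1 − ⊕ φᵢ : ∐ Yᵢ ⟶ ∐ Yᵢ` whose cone is the homotopy colimit. -/
noncomputable def hocolimMap (Y : ℕ → C) (φ : ∀ i, Y i ⟶ Y (i + 1)) [HasCoproduct Y] :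
    (∐ Y) ⟶ ∐ Y :=
  Sigma.desc fun i => Sigma.ι Y i - φ i ≫ Sigma.ι Y (i + 1)

/-- `H` is a homotopy colimit of the sequence `(Y, φ)` if it is a cone of `hocolimMap Y φ`. -/
def IsHocolim (Y : ℕ → C) (φ : ∀ i, Y i ⟶ Y (i + 1)) [HasCoproduct Y] (H : C) : Prop :=
  ∃ (ι' : (∐ Y) ⟶ H) (π : H ⟶ (∐ Y)⟦(1 : ℤ)⟧),
    Triangle.mk (hocolimMap Y φ) ι' π ∈ distTriang C

/-- `Z` is a cone of the morphism `f`. -/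
def IsConeOf {A B : C} (f : A ⟶ B) (Z : C) : Prop :=
  ∃ (g : B ⟶ Z) (h : Z ⟶ A⟦(1 : ℤ)⟧), Triangle.mk f g h ∈ distTriang C

/-- A class of objects is extension-closed if it contains `0` and is closed under
extensions in distinguished triangles. -/
def IsExtClosed (P : Set C) : Prop :=
  (0 : C) ∈ P ∧
    ∀ T : Triangle C, (T ∈ distTriang C) → T.obj₁ ∈ P → T.obj₃ ∈ P → T.obj₂ ∈ P

/-- A class of objects is strongly extension-closed if it contains `0` and contains all
homotopy colimits of sequences whose first term and all cones of connecting maps lie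
in the class. -/
def IsStronglyExtClosed [HasCountableCoproducts C] (P : Set C) : Prop :=
  (0 : C) ∈ P ∧
    ∀ (Y : ℕ → C) (φ : ∀ i, Y i ⟶ Y (i + 1)) (H : C), IsHocolim Y φ H →
      Y 0 ∈ P → (∀ i, ∃ Z, IsConeOf (φ i) Z ∧ Z ∈ P) → H ∈ P

/-- A split monomorphism (with explicit biproduct data) gives a distinguished triangle
with zero connecting map. -/
lemma splitMono_distTriang [HasBinaryBiproducts C] {S S' B : C} (u : S ⟶ S') (g' : S' ⟶ B)
    (r : S' ⟶ S) (s : B ⟶ S') (h1 : u ≫ r = 𝟙 S) (h2 : u ≫ g' = 0) (h3 : s ≫ r = 0)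
    (h4 : s ≫ g' = 𝟙 B) (h5 : r ≫ u + g' ≫ s = 𝟙 S') :
    Triangle.mk u g' (0 : B ⟶ S⟦(1 : ℤ)⟧) ∈ distTriang C := by
  refine isomorphic_distinguished _ (binaryBiproductTriangle_distinguished S B) _ ?_
  refine Triangle.isoMk _ _ (Iso.refl S)
    (⟨biprod.lift r g', biprod.desc u s, by simp [h5], by ext <;> simp [h1, h2, h3, h4]⟩ :
      S' ≅ S ⊞ B) (Iso.refl B) ?_ ?_ ?_
  · show u ≫ biprod.lift r g' = 𝟙 S ≫ biprod.inl
    ext <;> simp [h1, h2]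
  · show g' ≫ 𝟙 B = biprod.lift r g' ≫ biprod.snd
    simp [h4]
  · show (0 : B ⟶ S⟦(1 : ℤ)⟧) ≫ (shiftFunctor C (1 : ℤ)).map (𝟙 S) = 𝟙 B ≫ 0
    simp

/-- Every strongly extension-closed class is extension-closed. -/
theorem stmt4 [HasCountableCoproducts C] (P : Set C) (hP : IsStronglyExtClosed P) :
    IsExtClosed P := by
  have hbb : HasBinaryBiproducts C := hasBinaryBiproducts_of_finite_biproducts C
  refine ⟨hP.1, fun T hT h₁ h₃ => ?_⟩
  -- the sequence A → B → B → B → ⋯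
  let Y : ℕ → C := fun i => Nat.rec T.obj₁ (fun _ _ => T.obj₂) i
  let φ : ∀ i, Y i ⟶ Y (i + 1) := fun i => Nat.rec T.mor₁ (fun _ _ => 𝟙 T.obj₂) i
  -- the homotopy colimit of this sequence is B = T.obj₂
  apply hP.2 Y φ T.obj₂ ?_ h₁ ?_
  · -- IsHocolim Y φ T.obj₂
    let gc : ∀ i, Y i ⟶ T.obj₂ := fun i => Nat.rec T.mor₁ (fun _ _ => 𝟙 T.obj₂) i
    let ι0 : T.obj₁ ⟶ ∐ Y := Sigma.ι Y 0
    let ιB : ℕ → (T.obj₂ ⟶ ∐ Y) := fun j => Sigma.ι Y (j + 1)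
    let rc : ∀ i, Y i ⟶ ∐ Y :=
      fun i => Nat.rec ι0 (fun n _ => -∑ j ∈ Finset.range n, ιB j) i
    refine ⟨Sigma.desc gc, 0, ?_⟩
    set u : (∐ Y) ⟶ ∐ Y := hocolimMap Y φ with hu
    set g' : (∐ Y) ⟶ T.obj₂ := Sigma.desc gc with hg'
    set r : (∐ Y) ⟶ ∐ Y := Sigma.desc rc with hr
    set s : T.obj₂ ⟶ ∐ Y := ιB 0 with hs
    have hu0 : ι0 ≫ u = ι0 - T.mor₁ ≫ ιB 0 := by
      simp only [hu, ι0, ιB, hocolimMap, colimit.ι_desc]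
      rfl
    have huS : ∀ j, ιB j ≫ u = ιB j - ιB (j + 1) := fun j => by
      simp only [hu, ιB, hocolimMap, colimit.ι_desc]
      show Sigma.ι Y (j + 1) - 𝟙 T.obj₂ ≫ Sigma.ι Y (j + 2) = _
      rw [Category.id_comp]
    have hr0 : ι0 ≫ r = ι0 := by
      simp only [hr, ι0, colimit.ι_desc]
      rfl
    have hrS : ∀ j, ιB j ≫ r = -∑ k ∈ Finset.range j, ιB k := fun j => by
      simp only [hr, ιB, colimit.ι_desc]
      rfl
    have hg0 : ι0 ≫ g' = T.mor₁ := by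
      simp only [hg', ι0, colimit.ι_desc]
      rfl
    have hgS : ∀ j, ιB j ≫ g' = 𝟙 T.obj₂ := fun j => by
      simp only [hg', ιB, colimit.ι_desc]
      rfl
    have h1 : u ≫ r = 𝟙 (∐ Y) := by
      apply Limits.Sigma.hom_ext
      intro i
      match i with
      | 0 =>
        show ι0 ≫ u ≫ r = ι0 ≫ 𝟙 (∐ Y)
        rw [← Category.assoc, hu0, Preadditive.sub_comp, Category.assoc, hr0,
          hrS 0, Category.comp_id]
        simp
      | (j + 1) =>
        show ιB j ≫ u ≫ r = ιB j ≫ 𝟙 (∐ Y)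
        rw [← Category.assoc, huS, Preadditive.sub_comp, hrS, hrS,
          Finset.sum_range_succ, Category.comp_id]
        abel
    have h2 : u ≫ g' = 0 := by
      apply Limits.Sigma.hom_ext
      intro i
      match i with
      | 0 =>
        show ι0 ≫ u ≫ g' = ι0 ≫ 0
        rw [← Category.assoc, hu0, Preadditive.sub_comp, Category.assoc, hg0,
          hgS 0, Category.comp_id, comp_zero, sub_self]
      | (j + 1) =>
        show ιB j ≫ u ≫ g' = ιB j ≫ 0
        rw [← Category.assoc, huS, Preadditive.sub_comp, hgS, hgS, comp_zero, sub_self]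
    have h3 : s ≫ r = 0 := by
      rw [hs, hrS 0]
      simp
    have h4 : s ≫ g' = 𝟙 T.obj₂ := by
      rw [hs, hgS 0]
    have h5 : r ≫ u + g' ≫ s = 𝟙 (∐ Y) := by
      apply Limits.Sigma.hom_ext
      intro i
      match i with
      | 0 =>
        show ι0 ≫ (r ≫ u + g' ≫ s) = ι0 ≫ 𝟙 (∐ Y)
        rw [Preadditive.comp_add, ← Category.assoc, ← Category.assoc, hr0, hg0,
          hu0, Category.comp_id]
        abel
      | (j + 1) =>
        show ιB j ≫ (r ≫ u + g' ≫ s) = ιB j ≫ 𝟙 (∐ Y)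
        rw [Preadditive.comp_add, ← Category.assoc, ← Category.assoc, hrS, hgS,
          Category.id_comp, Category.comp_id, Preadditive.neg_comp,
          Preadditive.sum_comp]
        simp only [huS]
        rw [Finset.sum_range_sub' (f := ιB)]
        abel
    exact splitMono_distTriang u g' r s h1 h2 h3 h4 h5
  · -- cones of the connecting maps are in P
    intro i
    match i with
    | 0 => exact ⟨T.obj₃, ⟨T.mor₂, T.mor₃, hT⟩, h₃⟩
    | (n + 1) => exact ⟨0, ⟨0, 0, contractible_distinguished T.obj₂⟩, hP.1⟩
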